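/- arXiv:1903.02112 — 8 statements merged into one kernel-verified Lean document; each statement's English description precedes it below -/
import Mathlib

section
/- Let q be an odd prime power and A ∈ F_q with A³ + 1 ≠ 0. Then the function f(x) = x(x^{q²} + A x^q) is planar on F_{q³}. -/
/-- Key kernel lemma: the linearized part of the difference map has trivial kernel. -/
theorem planar_key (r k q : ℕ) [Fact r.Prime] (E : Type*) [Field E]
    [CharP E r] (hqr : q = r ^ k) (hq0 : q ≠ 0)
    (hq3 : ∀ z : E, z ^ q ^ 3 = z)
    (h2 : (2 : E) ≠ 0)
    (A' : E) (hA'q : A' ^ q = A') (hA3 : A' ^ 3 + 1 ≠ 0)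
    (C : E) (hC : C ≠ 0) (x : E)
    (h : C * x ^ q ^ 2 + A' * C * x ^ q + (C ^ q ^ 2 + A' * C ^ q) * x = 0) :
    x = 0 := by
  have frob : ∀ u v : E, (u + v) ^ q = u ^ q + v ^ q := by
    intro u v; rw [hqr]; exact add_pow_char_pow u v r k
  have powpow : ∀ z : E, (z ^ q ^ 2) ^ q = z := by
    intro z
    have e : q ^ 2 * q = q ^ 3 := by ring
    rw [← pow_mul, e]
    exact hq3 z
  have powpow2 : ∀ z : E, (z ^ q) ^ q = z ^ q ^ 2 := by
    intro z
    have e : q * q = q ^ 2 := by ring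
    rw [← pow_mul, e]
  -- raise h to the q-th power (twice)
  have h2' : A' * C ^ q * x ^ q ^ 2 + (C + A' * C ^ q ^ 2) * x ^ q + C ^ q * x = 0 := by
    have e := congrArg (· ^ q) h
    simp only [frob, mul_pow, hA'q, powpow, powpow2, zero_pow hq0] at e
    linear_combination e
  have h3 : (C ^ q + A' * C) * x ^ q ^ 2 + C ^ q ^ 2 * x ^ q + A' * C ^ q ^ 2 * x = 0 := by
    have e := congrArg (· ^ q) h2'
    simp only [frob, mul_pow, hA'q, powpow, powpow2, zero_pow hq0] at e
    linear_combination e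
  -- Cramer-style elimination using the adjugate of the 3×3 system
  have key : (-2 * (C * C ^ q * C ^ q ^ 2) * (1 + A' ^ 3)) * x = 0 := by
    linear_combination
      (A' * C ^ q * C ^ q ^ 2 - (C + A' * C ^ q ^ 2) * (C ^ q + A' * C)) * h
      + (-(C * C ^ q ^ 2) + A' * C * C ^ q + A' ^ 2 * C ^ 2) * h2'
      + (C ^ 2 + A' * C * C ^ q ^ 2 - A' ^ 2 * C * C ^ q) * h3
  have hb0 : C ^ q ≠ 0 := pow_ne_zero _ hC
  have hc0 : C ^ q ^ 2 ≠ 0 := pow_ne_zero _ hC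
  have habc : (-2 * (C * C ^ q * C ^ q ^ 2) * (1 + A' ^ 3)) ≠ 0 := by
    refine mul_ne_zero (mul_ne_zero (neg_ne_zero.mpr h2)
      (mul_ne_zero (mul_ne_zero hC hb0) hc0)) ?_
    intro h'; apply hA3; linear_combination h'
  exact (mul_eq_zero.mp key).resolve_left habc

/-- If `A ∈ F_q` with `A³ + 1 ≠ 0` then `f(x) = x (x^{q²} + A x^q)` is planar on `F_{q³}`. -/
theorem stmt_5 (q : ℕ) (hp : IsPrimePow q) (hq : Odd q)
    (F E : Type*) [Field F] [Fintype F] [Field E] [Fintype E] [Algebra F E]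
    (hF : Fintype.card F = q) (hE : Fintype.card E = q ^ 3)
    (A : F) (hA : A ^ 3 + 1 ≠ 0) :
    ∀ C : E, C ≠ 0 → Function.Bijective (fun x : E =>
      (x + C) * ((x + C) ^ (q ^ 2) + algebraMap F E A * (x + C) ^ q)
        - x * (x ^ (q ^ 2) + algebraMap F E A * x ^ q)) := by
  obtain ⟨r, k, hrp, hk, hrk⟩ := hp
  have hrprime : r.Prime := hrp.nat_prime
  haveI : Fact r.Prime := ⟨hrprime⟩
  have hqr : q = r ^ k := hrk.symm
  have hq0 : q ≠ 0 := by
    rw [hqr]; exact pow_ne_zero _ hrprime.pos.ne'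
  -- characteristic of E is r
  have hcharE : CharP E r := by
    rcases CharP.exists E with ⟨c, hc⟩
    haveI := hc
    have hcp : c.Prime := CharP.char_is_prime E c
    have hdvd : c ∣ Fintype.card E :=
      (CharP.cast_eq_zero_iff E c (Fintype.card E)).mp (FiniteField.cast_card_eq_zero E)
    rw [hE, hqr, ← pow_mul] at hdvd
    have : c = r := (Nat.prime_dvd_prime_iff_eq hcp hrprime).mp
      (hcp.dvd_of_dvd_pow hdvd)
    rwa [this] at hc
  haveI := hcharE
  -- r is odd, so 2 ≠ 0 in E
  have hr2 : r ≠ 2 := by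
    intro h
    rw [h] at hqr
    have : Even q := by
      rw [hqr]; exact (Nat.even_pow).mpr ⟨even_iff_two_dvd.mpr dvd_rfl, hk.ne'⟩
    exact (Nat.not_even_iff_odd.mpr hq) this
  have h2 : (2 : E) ≠ 0 := by
    have : ((2 : ℕ) : E) ≠ 0 := by
      rw [Ne, CharP.cast_eq_zero_iff E r 2]
      intro hdvd
      exact hr2 ((Nat.prime_dvd_prime_iff_eq hrprime Nat.prime_two).mp hdvd)
    simpa using this
  have hq3 : ∀ z : E, z ^ q ^ 3 = z := by
    intro z; rw [← hE]; exact FiniteField.pow_card z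
  set A' := algebraMap F E A with hA'
  have hA'q : A' ^ q = A' := by
    rw [hA', ← map_pow, ← hF, FiniteField.pow_card]
  have hA3 : A' ^ 3 + 1 ≠ 0 := by
    intro h
    apply hA
    apply (algebraMap F E).injective
    rw [map_add, map_pow, map_one, map_zero]
    exact h
  have frob2 : ∀ u v : E, (u + v) ^ q ^ 2 = u ^ q ^ 2 + v ^ q ^ 2 := by
    intro u v
    have e : (r ^ k) ^ 2 = r ^ (k * 2) := by rw [pow_mul]
    rw [hqr, e]
    exact add_pow_char_pow u v r (k * 2)
  have frob : ∀ u v : E, (u + v) ^ q = u ^ q + v ^ q := by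
    intro u v; rw [hqr]; exact add_pow_char_pow u v r k
  have sfrob2 : ∀ u v : E, (u - v) ^ q ^ 2 = u ^ q ^ 2 - v ^ q ^ 2 := by
    intro u v
    have e : (r ^ k) ^ 2 = r ^ (k * 2) := by rw [pow_mul]
    rw [hqr, e]
    exact sub_pow_char_pow u v (k * 2)
  have sfrob : ∀ u v : E, (u - v) ^ q = u ^ q - v ^ q := by
    intro u v; rw [hqr]; exact sub_pow_char_pow u v k
  intro C hC
  rw [← Finite.injective_iff_bijective]
  intro x₁ x₂ h
  simp only [frob2, frob] at h
  have hker : C * (x₁ - x₂) ^ q ^ 2 + A' * C * (x₁ - x₂) ^ q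
      + (C ^ q ^ 2 + A' * C ^ q) * (x₁ - x₂) = 0 := by
    rw [sfrob2, sfrob]
    linear_combination h
  exact sub_eq_zero.mp
    (planar_key r k q E hqr hq0 hq3 h2 A' hA'q hA3 C hC (x₁ - x₂) hker)
end

section
/- Let q be an odd prime power and A ∈ F_q with A³ + 1 = 0. Then the function f(x) = x(x^{q²} + A x^q) is not planar on F_{q³}. -/
/-- If `A ∈ F_q` with `A³ + 1 = 0` then `f(x) = x (x^{q²} + A x^q)` is not planar on `F_{q³}`. -/
theorem stmt_6 (q : ℕ) (hp : IsPrimePow q) (hq : Odd q)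
    (F E : Type*) [Field F] [Fintype F] [Field E] [Fintype E] [Algebra F E]
    (hF : Fintype.card F = q) (hE : Fintype.card E = q ^ 3)
    (A : F) (hA : A ^ 3 + 1 = 0) :
    ¬ ∀ C : E, C ≠ 0 → Function.Bijective (fun x : E =>
        (x + C) * ((x + C) ^ (q ^ 2) + algebraMap F E A * (x + C) ^ q)
          - x * (x ^ (q ^ 2) + algebraMap F E A * x ^ q)) := by
  intro h
  have hq1 : 1 < q := hp.two_le
  set a : E := algebraMap F E A with ha_def
  have hA3 : A ^ 3 = -1 := eq_neg_of_add_eq_zero_left hA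
  have hAne : A ≠ 0 := by
    intro h0
    rw [h0] at hA3
    simp at hA3
  have hane : a ≠ 0 := by
    rw [ha_def]
    exact (map_ne_zero (algebraMap F E)).mpr hAne
  have haq : a ^ q = a := by
    rw [ha_def, ← map_pow]
    congr 1
    calc A ^ q = A ^ Fintype.card F := by rw [hF]
      _ = A := FiniteField.pow_card A
  have hmaq : (-a) ^ q = -a := by rw [hq.neg_pow, haq]
  have ha3 : (-a) ^ 3 = 1 := by
    have : a ^ 3 = -1 := by rw [ha_def, ← map_pow, hA3]; simp
    rw [Odd.neg_pow (⟨1, rfl⟩ : Odd 3), this, neg_neg]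
  have hau : (-a) ^ (q ^ 2 + q + 1) = 1 := by
    have hq2 : (-a) ^ (q ^ 2) = -a := by rw [show q ^ 2 = q * q by ring, pow_mul, hmaq, hmaq]
    rw [pow_add, pow_add, hq2, hmaq, ← ha3]
    ring
  -- units setup
  set u : Eˣ := Units.mk0 (-a) (neg_ne_zero.mpr hane) with hu_def
  have hu1 : u ^ (q ^ 2 + q + 1) = 1 := by
    ext
    push_cast [hu_def]
    exact hau
  obtain ⟨g, hg⟩ := IsCyclic.exists_generator (α := Eˣ)
  have hord : orderOf g = q ^ 3 - 1 := by
    classical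
    rw [orderOf_eq_card_of_forall_mem_zpowers hg, Nat.card_eq_fintype_card,
      Fintype.card_units, hE]
  obtain ⟨m, hm⟩ := hg u
  replace hm : g ^ m = u := hm
  have h1q3 : 1 ≤ q ^ 3 := Nat.one_le_pow _ _ (by omega)
  have hqq2 : q ≤ q ^ 2 := by nlinarith
  have hcast : ((q ^ 3 - 1 : ℕ) : ℤ) = ((q : ℤ) - 1) * ((q : ℤ) ^ 2 + q + 1) := by
    rw [Nat.cast_sub h1q3]
    push_cast
    ring
  have hdvd : ((q : ℤ) - 1) * ((q : ℤ) ^ 2 + q + 1) ∣ m * ((q : ℤ) ^ 2 + q + 1) := by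
    have hz : g ^ (m * ((q : ℤ) ^ 2 + q + 1)) = 1 := by
      have hc2 : ((q : ℤ) ^ 2 + q + 1) = ((q ^ 2 + q + 1 : ℕ) : ℤ) := by push_cast; ring
      rw [hc2, zpow_mul, hm, zpow_natCast, hu1]
    have hd := orderOf_dvd_iff_zpow_eq_one.mpr hz
    rw [hord] at hd
    rwa [hcast] at hd
  have hKne : ((q : ℤ) ^ 2 + q + 1) ≠ 0 := by positivity
  have hdvd' : ((q : ℤ) - 1) ∣ m := (mul_dvd_mul_iff_right hKne).mp hdvd
  obtain ⟨m₁, hm1⟩ := hdvd'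
  set v : Eˣ := g ^ (-((q : ℤ) + 1) * m₁) with hv_def
  set C : E := (v : E) with hC_def
  have hCne : C ≠ 0 := v.ne_zero
  -- v ^ (q^2 - q) = u
  have hkey : v ^ ((q ^ 2 - q : ℕ) : ℤ) = u := by
    have hsub : ((q ^ 2 - q : ℕ) : ℤ) = (q : ℤ) ^ 2 - q := by
      rw [Nat.cast_sub hqq2]; push_cast; ring
    have hdvd2 : (orderOf g : ℤ) ∣ (-((q : ℤ) + 1) * m₁) * ((q ^ 2 - q : ℕ) : ℤ) - m := by
      rw [hord, hcast, hsub, hm1]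
      exact ⟨-m₁, by ring⟩
    have hone : g ^ ((-((q : ℤ) + 1) * m₁) * ((q ^ 2 - q : ℕ) : ℤ) - m) = 1 :=
      orderOf_dvd_iff_zpow_eq_one.mp hdvd2
    calc v ^ ((q ^ 2 - q : ℕ) : ℤ)
        = g ^ ((-((q : ℤ) + 1) * m₁) * ((q ^ 2 - q : ℕ) : ℤ)) := by
          rw [hv_def, ← zpow_mul]
      _ = g ^ ((-((q : ℤ) + 1) * m₁) * ((q ^ 2 - q : ℕ) : ℤ) - m + m) := by ring_nf
      _ = g ^ ((-((q : ℤ) + 1) * m₁) * ((q ^ 2 - q : ℕ) : ℤ) - m) * g ^ m := zpow_add g _ _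
      _ = u := by rw [hone, one_mul, hm]
  have hC : C ^ (q ^ 2 - q) = -a := by
    have : ((v ^ ((q ^ 2 - q : ℕ) : ℤ) : Eˣ) : E) = ((u : Eˣ) : E) := by rw [hkey]
    rwa [zpow_natCast, Units.val_pow_eq_pow_val, hu_def, Units.val_mk0] at this
  -- now the key vanishing
  have hX : C * (C ^ (q ^ 2) + a * C ^ q) = 0 := by
    have hsplit : C ^ (q ^ 2) = -a * C ^ q := by
      calc C ^ (q ^ 2) = C ^ (q ^ 2 - q + q) := by congr 1; omega
        _ = C ^ (q ^ 2 - q) * C ^ q := pow_add C _ _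
        _ = -a * C ^ q := by rw [hC]
    rw [hsplit]; ring
  have h2q : (2 : E) ^ q = 2 := by
    have h2F : ((2 : F)) ^ q = 2 := by rw [← hF]; exact FiniteField.pow_card _
    calc (2 : E) ^ q = (algebraMap F E (2 : F)) ^ q := by rw [map_ofNat]
      _ = algebraMap F E ((2 : F) ^ q) := (map_pow _ _ _).symm
      _ = 2 := by rw [h2F, map_ofNat]
  have h2q2 : (2 : E) ^ (q ^ 2) = 2 := by rw [show q ^ 2 = q * q by ring, pow_mul, h2q, h2q]
  have hbij := (h C hCne).injective
  have hgC : (C + C) * ((C + C) ^ (q ^ 2) + a * (C + C) ^ q)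
      - C * (C ^ (q ^ 2) + a * C ^ q)
      = (0 + C) * ((0 + C) ^ (q ^ 2) + a * (0 + C) ^ q)
      - 0 * (0 ^ (q ^ 2) + a * 0 ^ q) := by
    have hCC : C + C = 2 * C := by ring
    rw [hCC, mul_pow, mul_pow, h2q, h2q2]
    rw [zero_add, zero_mul, sub_zero]
    have : 2 * C * (2 * C ^ (q ^ 2) + a * (2 * C ^ q))
        = 4 * (C * (C ^ (q ^ 2) + a * C ^ q)) := by ring
    rw [this, hX]
    ring
  have : C = 0 := hbij hgC
  exact hCne this
end

section
/- Let q be an odd prime power and A, B ∈ F_q with A³ - 2AB + 1 = 0 and A³ ≠ 1 and A³ ≠ -1. Then f_{A,B}(x) = x(x^{q²} + A x^q + B x) is planar on F_{q³}. -/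
private lemma planar_core {E : Type*} [Field E] (a b z zq zq2 c cq cq2 : E)
    (h2e : (2:E) ≠ 0) (hz : z ≠ 0) (hc : c ≠ 0) (hzq : zq ≠ 0) (hcq : cq ≠ 0)
    (hzq2 : zq2 ≠ 0) (hcq2 : cq2 ≠ 0)
    (hA1 : a ^ 3 ≠ 1) (hA2 : a ^ 3 ≠ -1) (hAB : a ^ 3 + 1 = 2 * a * b)
    (k0 : zq2*c + z*cq2 + a*(zq*c + z*cq) + 2*b*(z*c) = 0)
    (k1 : z*cq + zq*c + a*(zq2*cq + zq*cq2) + 2*b*(zq*cq) = 0)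
    (k2 : zq*cq2 + zq2*cq + a*(z*cq2 + zq2*c) + 2*b*(zq2*cq2) = 0) : False := by
  have ha : a ≠ 0 := by
    intro h0; rw [h0] at hAB; norm_num at hAB
  have hb : b ≠ 0 := by
    intro h0; exact hA2 (by rw [h0] at hAB; linear_combination hAB)
  have hA3 : a ^ 3 - 1 ≠ 0 := sub_ne_zero.mpr hA1
  have h64 : (64 : E) ≠ 0 := by
    have h26 : ((2:E))^6 = 64 := by norm_num
    rw [← h26]; exact pow_ne_zero _ h2e
  have hBIG : (64*a^3*b^2*(a^3-1)^2*(z*c)*(zq*cq)*(zq2*cq2)) ≠ 0 :=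
    mul_ne_zero (mul_ne_zero (mul_ne_zero (mul_ne_zero (mul_ne_zero (mul_ne_zero h64
      (pow_ne_zero _ ha)) (pow_ne_zero _ hb)) (pow_ne_zero _ hA3))
      (mul_ne_zero hz hc)) (mul_ne_zero hzq hcq)) (mul_ne_zero hzq2 hcq2)
  have hG0 : (64*a^3*b^2*(a^3-1)^2*(z*c)*(zq*cq)*(zq2*cq2)) * (zq*c + z*cq) = 0 := by
    linear_combination (-32*a^4*b*(zq*cq)*(zq*c + z*cq)*(z*c) + 64*a^6*b^2*(zq*c + z*cq)^2*(zq2*cq + zq*cq2) - 64*a^6*b^2*(zq*cq)*(zq*c + z*cq)*(zq2*c + z*cq2) + 128*a^6*b^3*(zq*cq)*(zq*c + z*cq)*(z*c) + 64*a^7*(zq*c + z*cq)^2*(z*c) + 32*a^7*b*(zq*c + z*cq)^3 + 64*a^7*b*(zq*cq)*(zq*c + z*cq)*(z*c) + 64*a^7*b^2*(zq*cq)*(zq*c + z*cq)^2 + 64*a^8*(zq*c + z*cq)*(zq2*cq + zq*cq2)*(z*c) - 32*a^10*b*(zq*cq)*(zq*c + z*cq)*(z*c)) * k0 + (16*a^3*(zq*c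 + z*cq)*(z*c)^2 - 16*a^3*(zq*c + z*cq)*(zq2*cq + zq*cq2)*(z*c) + 16*a^5*(zq*c + z*cq)^2*(z*c) - 16*a^6*(zq*c + z*cq)*(z*c)^2 + 32*a^6*(zq*c + z*cq)*(zq2*cq + zq*cq2)*(z*c) + 128*a^6*b*(zq2*cq2)*(zq*c + z*cq)*(z*c) - 128*a^6*b^3*(zq*c + z*cq)*(z*c)^2 - 128*a^7*b^2*(zq*c + z*cq)^2*(z*c) - 32*a^8*(zq*c + z*cq)^2*(z*c) - 32*a^8*b*(zq*c + z*cq)^3 - 16*a^9*(zq*c + z*cq)*(z*c)^2 - 16*a^9*(zq*c + z*cq)*(zq2*cq + zq*cq2)*(z*c) + 16*a^11*(zq*c + z*cq)^2*(z*c) + 16*a^12*(zq*c + z*cq)*(z*c)^2) * k1 + (32*a^3*b*(zq*cq)*(zq*c + z*cq)*(z*c) - 64*a^6*(zq*c + z*cq)^2*(z*c) - 32*a^6*b*(zq*c + z*cq)^3 - 64*a^6*b*(zq*cq)*(zq*c + z*cq)*(z*c) - 64*a^7*(zq*c + z*cq)*(zq2*cq + zq*cq2)*(z*c) + 32*a^9*b*(zq*cq)*(zq*c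 + z*cq)*(z*c)) * k2 - (16*a^3*(zq*c + z*cq)^2*(z*c)^2 - 16*a^3*(zq*c + z*cq)^2*(zq2*cq + zq*cq2)*(z*c) + 32*a^3*b*(zq*cq)*(zq*c + z*cq)*(z*c)^2 + 16*a^4*(zq*c + z*cq)*(zq2*cq + zq*cq2)*(z*c)^2 - 16*a^4*(zq*c + z*cq)*(zq2*cq + zq*cq2)^2*(z*c) + 32*a^4*b*(zq*c + z*cq)^2*(z*c)^2 - 32*a^4*b*(zq*c + z*cq)^2*(zq2*cq + zq*cq2)*(z*c) + 16*a^5*(zq*c + z*cq)^3*(z*c) + 32*a^5*b*(zq*c + z*cq)*(zq2*cq + zq*cq2)*(z*c)^2 - 32*a^5*b*(zq*c + z*cq)*(zq2*cq + zq*cq2)^2*(z*c) + 64*a^5*b^2*(zq*c + z*cq)^2*(z*c)^2 - 64*a^5*b^2*(zq*c + z*cq)^2*(zq2*cq + zq*cq2)*(z*c) - 32*a^6*(zq*c + z*cq)^2*(z*c)^2 + 32*a^6*b*(zq*c + z*cq)^3*(z*c) - 32*a^6*b*(zq*c + z*cq)^3*(zq2*cq + zq*cq2) - 64*a^6*b*(zq*cq)*(zq*c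 + z*cq)*(z*c)^2 + 64*a^6*b^2*(zq*c + z*cq)*(zq2*cq + zq*cq2)*(z*c)^2 - 32*a^7*(zq*c + z*cq)*(zq2*cq + zq*cq2)*(z*c)^2 - 16*a^7*(zq*c + z*cq)*(zq2*cq + zq*cq2)^2*(z*c) + 32*a^7*b*(zq*c + z*cq)^2*(z*c)^2 + 32*a^7*b*(zq*c + z*cq)^2*(zq2*cq + zq*cq2)*(z*c) + 16*a^8*(zq*c + z*cq)^3*(z*c) + 32*a^8*b*(zq*c + z*cq)*(zq2*cq + zq*cq2)*(z*c)^2 + 16*a^9*(zq*c + z*cq)^2*(z*c)^2 + 16*a^9*(zq*c + z*cq)^2*(zq2*cq + zq*cq2)*(z*c) + 32*a^9*b*(zq*cq)*(zq*c + z*cq)*(z*c)^2 + 16*a^10*(zq*c + z*cq)*(zq2*cq + zq*cq2)*(z*c)^2) * hAB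
  have hS : zq*c + z*cq = 0 := (mul_eq_zero.mp hG0).resolve_left hBIG
  have hG1 : (64*a^3*b^2*(a^3-1)^2*(z*c)*(zq*cq)*(zq2*cq2)) * (zq2*cq + zq*cq2) = 0 := by
    linear_combination (-32*a^4*b*(zq*cq)*(zq2*cq + zq*cq2)*(z*c) + 64*a^6*b^2*(zq*c + z*cq)*(zq2*cq + zq*cq2)^2 - 64*a^6*b^2*(zq*cq)*(zq2*c + z*cq2)*(zq2*cq + zq*cq2) + 128*a^6*b^3*(zq*cq)*(zq2*cq + zq*cq2)*(z*c) + 64*a^7*(zq*c + z*cq)*(zq2*cq + zq*cq2)*(z*c) + 32*a^7*b*(zq*c + z*cq)^2*(zq2*cq + zq*cq2) + 64*a^7*b*(zq*cq)*(zq2*cq + zq*cq2)*(z*c) + 64*a^7*b^2*(zq*cq)*(zq*c + z*cq)*(zq2*cq + zq*cq2) + 64*a^8*(zq2*cq + zq*cq2)^2*(z*c) - 32*a^10*b*(zq*cq)*(zq2*cq + zq*cq2)*(z*c)) * k0 + (16*a^3*(zq2*cq + zq*cq2)*(z*c)^2 - 16*a^3*(zq2*cq + zq*cq2)^2*(z*c)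 + 16*a^5*(zq*c + z*cq)*(zq2*cq + zq*cq2)*(z*c) - 16*a^6*(zq2*cq + zq*cq2)*(z*c)^2 + 32*a^6*(zq2*cq + zq*cq2)^2*(z*c) + 128*a^6*b*(zq2*cq2)*(zq2*cq + zq*cq2)*(z*c) - 128*a^6*b^3*(zq2*cq + zq*cq2)*(z*c)^2 - 128*a^7*b^2*(zq*c + z*cq)*(zq2*cq + zq*cq2)*(z*c) - 32*a^8*(zq*c + z*cq)*(zq2*cq + zq*cq2)*(z*c) - 32*a^8*b*(zq*c + z*cq)^2*(zq2*cq + zq*cq2) - 16*a^9*(zq2*cq + zq*cq2)*(z*c)^2 - 16*a^9*(zq2*cq + zq*cq2)^2*(z*c) + 16*a^11*(zq*c + z*cq)*(zq2*cq + zq*cq2)*(z*c) + 16*a^12*(zq2*cq + zq*cq2)*(z*c)^2) * k1 + (32*a^3*b*(zq*cq)*(zq2*cq + zq*cq2)*(z*c) - 64*a^6*(zq*c + z*cq)*(zq2*cq + zq*cq2)*(z*c) - 32*a^6*b*(zq*c + z*cq)^2*(zq2*cq + zq*cq2) - 64*a^6*b*(zq*cq)*(zq2*cq + zq*cq2)*(z*c)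 - 64*a^7*(zq2*cq + zq*cq2)^2*(z*c) + 32*a^9*b*(zq*cq)*(zq2*cq + zq*cq2)*(z*c)) * k2 - (16*a^3*(zq*c + z*cq)*(zq2*cq + zq*cq2)*(z*c)^2 - 16*a^3*(zq*c + z*cq)*(zq2*cq + zq*cq2)^2*(z*c) + 32*a^3*b*(zq*cq)*(zq2*cq + zq*cq2)*(z*c)^2 + 16*a^4*(zq2*cq + zq*cq2)^2*(z*c)^2 - 16*a^4*(zq2*cq + zq*cq2)^3*(z*c) + 32*a^4*b*(zq*c + z*cq)*(zq2*cq + zq*cq2)*(z*c)^2 - 32*a^4*b*(zq*c + z*cq)*(zq2*cq + zq*cq2)^2*(z*c) + 16*a^5*(zq*c + z*cq)^2*(zq2*cq + zq*cq2)*(z*c) + 32*a^5*b*(zq2*cq + zq*cq2)^2*(z*c)^2 - 32*a^5*b*(zq2*cq + zq*cq2)^3*(z*c) + 64*a^5*b^2*(zq*c + z*cq)*(zq2*cq + zq*cq2)*(z*c)^2 - 64*a^5*b^2*(zq*c + z*cq)*(zq2*cq + zq*cq2)^2*(z*c) - 32*a^6*(zq*c + z*cq)*(zq2*cq + zq*cq2)*(z*c)^2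 + 32*a^6*b*(zq*c + z*cq)^2*(zq2*cq + zq*cq2)*(z*c) - 32*a^6*b*(zq*c + z*cq)^2*(zq2*cq + zq*cq2)^2 - 64*a^6*b*(zq*cq)*(zq2*cq + zq*cq2)*(z*c)^2 + 64*a^6*b^2*(zq2*cq + zq*cq2)^2*(z*c)^2 - 32*a^7*(zq2*cq + zq*cq2)^2*(z*c)^2 - 16*a^7*(zq2*cq + zq*cq2)^3*(z*c) + 32*a^7*b*(zq*c + z*cq)*(zq2*cq + zq*cq2)*(z*c)^2 + 32*a^7*b*(zq*c + z*cq)*(zq2*cq + zq*cq2)^2*(z*c) + 16*a^8*(zq*c + z*cq)^2*(zq2*cq + zq*cq2)*(z*c) + 32*a^8*b*(zq2*cq + zq*cq2)^2*(z*c)^2 + 16*a^9*(zq*c + z*cq)*(zq2*cq + zq*cq2)*(z*c)^2 + 16*a^9*(zq*c + z*cq)*(zq2*cq + zq*cq2)^2*(z*c) + 32*a^9*b*(zq*cq)*(zq2*cq + zq*cq2)*(z*c)^2 + 16*a^10*(zq2*cq + zq*cq2)^2*(z*c)^2) * hAB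
  have hW : zq2*cq + zq*cq2 = 0 := (mul_eq_zero.mp hG1).resolve_left hBIG
  have hM : (2*b)*(zq*cq) = 0 := by linear_combination k1 - hS - a * hW
  rcases mul_eq_zero.mp hM with h0 | h0
  · rcases mul_eq_zero.mp h0 with h0' | h0'
    · exact h2e h0'
    · exact hb h0'
  · rcases mul_eq_zero.mp h0 with h0' | h0'
    · exact hzq h0'
    · exact hcq h0'

/-- If `A³ - 2AB + 1 = 0`, `A³ ≠ 1` and `A³ ≠ -1`, then
`f_{A,B}(x) = x (x^{q²} + A x^q + B x)` is planar on `F_{q³}`. -/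
theorem stmt_7 (q : ℕ) (hp : IsPrimePow q) (hq : Odd q)
    (F E : Type*) [Field F] [Fintype F] [Field E] [Fintype E] [Algebra F E]
    (hF : Fintype.card F = q) (hE : Fintype.card E = q ^ 3)
    (A B : F) (h : A ^ 3 - 2 * A * B + 1 = 0) (h1 : A ^ 3 ≠ 1) (h2 : A ^ 3 ≠ -1) :
    ∀ C : E, C ≠ 0 → Function.Bijective (fun x : E =>
      (x + C) * ((x + C) ^ (q ^ 2) + algebraMap F E A * (x + C) ^ q
          + algebraMap F E B * (x + C))
        - x * (x ^ (q ^ 2) + algebraMap F E A * x ^ q + algebraMap F E B * x)) := by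
  obtain ⟨p, k, hpp, hk, hpk⟩ := hp
  have hppn : p.Prime := hpp.nat_prime
  haveI : Fact p.Prime := ⟨hppn⟩
  obtain ⟨n, hn1, hn2⟩ := FiniteField.card E (ringChar E)
  have hrp : ringChar E = p := by
    have hd : ringChar E ∣ p ^ (k * 3) := by
      have hpow : (ringChar E) ^ (n : ℕ) = p ^ (k * 3) := by
        rw [← hn2, hE, ← hpk, ← pow_mul]
      exact hpow ▸ dvd_pow_self (ringChar E) n.pos.ne'
    exact (Nat.prime_dvd_prime_iff_eq hn1 hppn).mp (hn1.dvd_of_dvd_pow hd)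
  haveI hcharE : CharP E p := ringChar.of_eq hrp
  have hp2 : p ≠ 2 := by
    intro hh
    rw [← hpk, hh] at hq
    exact (Nat.not_odd_iff_even.mpr ((Nat.even_pow).mpr ⟨even_two, hk.ne'⟩)) hq
  have h2e : (2 : E) ≠ 0 := by
    intro hh
    apply hp2
    have h2n : ((2 : ℕ) : E) = 0 := by exact_mod_cast hh
    exact (Nat.prime_dvd_prime_iff_eq hppn Nat.prime_two).mp
      ((CharP.cast_eq_zero_iff E p 2).mp h2n)
  intro C hC
  set a := algebraMap F E A with hadef
  set b := algebraMap F E B with hbdef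
  have hqpow : ∀ u v : E, (u + v)^q = u^q + v^q := by
    intro u v; rw [← hpk]; exact add_pow_char_pow u v p k
  have hsubpow : ∀ u v : E, (u - v)^q = u^q - v^q := by
    intro u v; rw [← hpk]; exact sub_pow_char_pow u v k
  have hq2 : ∀ u : E, u^(q^2) = (u^q)^q := by
    intro u; rw [pow_two, pow_mul]
  have hq3 : ∀ u : E, ((u^q)^q)^q = u := by
    intro u
    rw [← pow_mul, ← pow_mul]
    have hqq : q * (q * q) = q ^ 3 := by ring
    rw [hqq, ← hE]; exact FiniteField.pow_card u
  have haq : a^q = a := by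
    rw [hadef, ← map_pow]
    congr 1
    rw [← hF]; exact FiniteField.pow_card A
  have hbq : b^q = b := by
    rw [hbdef, ← map_pow]
    congr 1
    rw [← hF]; exact FiniteField.pow_card B
  have hABE : a^3 + 1 = 2*a*b := by
    have hmap := congrArg (algebraMap F E) h
    simp only [map_add, map_sub, map_mul, map_pow, map_one, map_zero, map_ofNat] at hmap
    linear_combination hmap
  have hA1E : a^3 ≠ 1 := by
    intro hh
    apply h1
    apply (algebraMap F E).injective
    rw [map_pow, map_one]; exact hh
  have hA2E : a^3 ≠ -1 := by
    intro hh
    apply h2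
    apply (algebraMap F E).injective
    rw [map_pow, map_neg, map_one]; exact hh
  rw [← Finite.injective_iff_bijective]
  intro x₁ x₂ hfe
  by_contra hne
  have hz : x₁ - x₂ ≠ 0 := sub_ne_zero.mpr hne
  simp only [hq2, hqpow] at hfe
  have k0 : ((x₁^q)^q - (x₂^q)^q)*C + (x₁ - x₂)*((C^q)^q)
      + a*((x₁^q - x₂^q)*C + (x₁ - x₂)*(C^q)) + 2*b*((x₁ - x₂)*C) = 0 := by
    linear_combination hfe
  -- Frobenius ring hom
  haveI : ExpChar E p := ExpChar.prime hppn
  set φ : E →+* E := iterateFrobenius E p k with hφdef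
  have hφ : ∀ u : E, φ u = u^q := by
    intro u; rw [hφdef, iterateFrobenius_def, hpk]
  have k1 : (x₁ - x₂)*(C^q) + (x₁^q - x₂^q)*C
      + a*(((x₁^q)^q - (x₂^q)^q)*(C^q) + (x₁^q - x₂^q)*((C^q)^q))
      + 2*b*((x₁^q - x₂^q)*(C^q)) = 0 := by
    have h' := congrArg φ k0
    simp only [map_add, map_mul, map_sub, map_pow, map_ofNat, map_zero] at h'
    rw [hφ x₁, hφ x₂, hφ C, hφ a, hφ b, haq, hbq, hq3 x₁, hq3 x₂, hq3 C] at h'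
    linear_combination h'
  have k2 : (x₁^q - x₂^q)*((C^q)^q) + ((x₁^q)^q - (x₂^q)^q)*(C^q)
      + a*((x₁ - x₂)*((C^q)^q) + ((x₁^q)^q - (x₂^q)^q)*C)
      + 2*b*(((x₁^q)^q - (x₂^q)^q)*((C^q)^q)) = 0 := by
    have h' := congrArg φ k1
    simp only [map_add, map_mul, map_sub, map_pow, map_ofNat, map_zero] at h'
    rw [hφ x₁, hφ x₂, hφ C, hφ a, hφ b, haq, hbq, hq3 x₁, hq3 x₂, hq3 C] at h'
    linear_combination h'
  have hzq : x₁^q - x₂^q ≠ 0 := by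
    rw [← hsubpow]; exact pow_ne_zero _ hz
  have hzq2 : (x₁^q)^q - (x₂^q)^q ≠ 0 := by
    rw [← hsubpow]; exact pow_ne_zero _ hzq
  exact planar_core a b (x₁ - x₂) (x₁^q - x₂^q) ((x₁^q)^q - (x₂^q)^q) C (C^q) ((C^q)^q)
    h2e hz hC hzq (pow_ne_zero _ hC) hzq2 (pow_ne_zero _ (pow_ne_zero _ hC))
    hA1E hA2E hABE k0 k1 k2
end

section
/- Let q be an odd prime power and B ∈ F_q with B³ ≠ 1. Then f(x) = x(x^{q²} + B² x^q + B x) is planar on F_{q³}. -/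
/-- Core algebraic lemma: if `φ` is a field endomorphism with `φ³ = id`, `2 ≠ 0`,
`b` fixed by `φ` with `b³ ≠ 1`, then the commutative product
`x ∘ y = x L(y) + y L(x)` with `L z = φ(φ z) + b² φ z + b z` has no zero divisors. -/
lemma stmt_8_core {E : Type*} [Field E] (φ : E →+* E)
    (hφ3 : ∀ z : E, φ (φ (φ z)) = z) (h2 : (2:E) ≠ 0)
    (b : E) (hbf : φ b = b) (hb3 : b ^ 3 ≠ 1)
    (x y : E) (hx : x ≠ 0) (hy : y ≠ 0)
    (H : x * (φ (φ y) + b^2 * φ y + b * y) + y * (φ (φ x) + b^2 * φ x + b * x) = 0) :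
    False := by
  have hz0 : ∀ z : E, φ z = 0 → z = 0 := by
    intro z hz
    have h := hφ3 z
    rw [hz, map_zero, map_zero] at h
    exact h.symm
  obtain ⟨r, hLx⟩ : ∃ r : E, φ (φ x) + b^2 * φ x + b * x = r * x :=
    ⟨(φ (φ x) + b^2 * φ x + b * x) * x⁻¹, by rw [mul_assoc, inv_mul_cancel₀ hx, mul_one]⟩
  have hLy : φ (φ y) + b^2 * φ y + b * y = -(r * y) := by
    apply mul_left_cancel₀ hx
    linear_combination H - y * hLx
  have e1_0 := congrArg φ hLx
  simp only [map_add, map_mul, map_pow, hbf, hφ3] at e1_0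
  have e1 : φ r * φ x = b^2*r*x + (1 - b^3)*x + (1 - b^3)*b*(φ x) := by
    linear_combination -e1_0 + b^2 * hLx
  have e2_0 := congrArg φ hLy
  simp only [map_add, map_mul, map_pow, map_neg, hbf, hφ3] at e2_0
  have e2 : -(φ r * φ y) = -(b^2*r*y) + (1 - b^3)*y + (1 - b^3)*b*(φ y) := by
    linear_combination -e2_0 + b^2 * hLy
  by_cases hbm : b ^ 3 = -1
  · -- case b³ = -1
    have hbm' : b^3 + 1 = 0 := by rw [hbm]; ring
    have hdx : (φ r - 2*b) * φ x = b^2*(r - 2*b)*x := by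
      linear_combination e1 + (x - b*φ x)*hbm'
    have hdy : (φ r + 2*b) * φ y = b^2*(r + 2*b)*y := by
      linear_combination -e2 + (b*φ y - y)*hbm'
    have hdx' := congrArg φ hdx
    simp only [map_mul, map_sub, map_add, map_pow, map_ofNat, hbf] at hdx'
    have hdy' := congrArg φ hdy
    simp only [map_mul, map_sub, map_add, map_pow, map_ofNat, hbf] at hdy'
    have hA0 : ((r-2*b)*(φ r-2*b)*(φ (φ r)-2*b)
        + b*((r-2*b)*(φ r-2*b) + (r-2*b)*(φ (φ r)-2*b) + (φ r-2*b)*(φ (φ r)-2*b))) * x = 0 := by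
      linear_combination (-((φ r-2*b)*(φ (φ r)-2*b)))*hLx + (φ r-2*b)*hdx'
        + (b^2*((φ r-2*b)+(φ (φ r)-2*b)))*hdx
        + (b*(r-2*b)*((φ r-2*b)+(φ (φ r)-2*b))*x)*hbm'
    have hB0 : ((r+2*b)*(φ r+2*b)*(φ (φ r)+2*b)
        - b*((r+2*b)*(φ r+2*b) + (r+2*b)*(φ (φ r)+2*b) + (φ r+2*b)*(φ (φ r)+2*b))) * y = 0 := by
      linear_combination ((φ r+2*b)*(φ (φ r)+2*b))*hLy + (-(φ r+2*b))*hdy'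
        + (-(b^2*((φ r+2*b)+(φ (φ r)+2*b))))*hdy
        + (-(b*(r+2*b)*((φ r+2*b)+(φ (φ r)+2*b))*y))*hbm'
    have hA : (r-2*b)*(φ r-2*b)*(φ (φ r)-2*b)
        + b*((r-2*b)*(φ r-2*b) + (r-2*b)*(φ (φ r)-2*b) + (φ r-2*b)*(φ (φ r)-2*b)) = 0 := by
      rcases mul_eq_zero.mp hA0 with h | h
      · exact h
      · exact absurd h hx
    have hB : (r+2*b)*(φ r+2*b)*(φ (φ r)+2*b)
        - b*((r+2*b)*(φ r+2*b) + (r+2*b)*(φ (φ r)+2*b) + (φ r+2*b)*(φ (φ r)+2*b)) = 0 := by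
      rcases mul_eq_zero.mp hB0 with h | h
      · exact h
      · exact absurd h hy
    have h2n : (2:E) * (r * φ r * φ (φ r)) = 0 := by linear_combination hA + hB
    have hn : r * φ r * φ (φ r) = 0 := by
      rcases mul_eq_zero.mp h2n with h | h
      · exact absurd h h2
      · exact h
    have hr0 : r = 0 := by
      rcases mul_eq_zero.mp hn with h | h
      · rcases mul_eq_zero.mp h with h' | h'
        · exact h'
        · exact hz0 r h'
      · exact hz0 r (hz0 (φ r) h)
    rw [hr0] at hdx hLx
    rw [map_zero] at hdx
    have hE1' : (2:E)*(b*φ x + x) = 0 := by linear_combination -hdx + 2*x*hbm'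
    have hE1 : b*φ x + x = 0 := by
      rcases mul_eq_zero.mp hE1' with h | h
      · exact absurd h h2
      · exact h
    have hE2 : b*φ (φ x) + φ x = 0 := by
      have h := congrArg φ hE1
      simpa only [map_add, map_mul, map_zero, hbf] using h
    have hLx0 : φ (φ x) + b^2*φ x + b*x = 0 := by linear_combination hLx
    have hx0 : x = 0 := by
      linear_combination b^2*hLx0 - b*hE2 + 2*hE1 - (b*φ x + x)*hbm'
    exact hx hx0
  · -- case b³ ≠ -1
    have hc : (1:E) - b^3 ≠ 0 := sub_ne_zero.mpr (Ne.symm hb3)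
    have hc1 : (1:E) + b^3 ≠ 0 := fun h => hbm (by linear_combination h)
    have A1 : (φ r - (1-b^3)*b) * φ x = (b^2*r + (1-b^3)) * x := by linear_combination e1
    have A1y : (φ r + (1-b^3)*b) * φ y = (b^2*r - (1-b^3)) * y := by linear_combination -e2
    have A2 := congrArg φ A1
    simp only [map_mul, map_sub, map_add, map_pow, map_one, hbf, hφ3] at A2
    have A3 := congrArg φ A2
    simp only [map_mul, map_sub, map_add, map_pow, map_one, hbf, hφ3] at A3
    have A2y := congrArg φ A1y
    simp only [map_mul, map_sub, map_add, map_pow, map_one, hbf, hφ3] at A2y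
    have A3y := congrArg φ A2y
    simp only [map_mul, map_sub, map_add, map_pow, map_one, hbf, hφ3] at A3y
    have hNx : x * φ x * φ (φ x) ≠ 0 :=
      mul_ne_zero (mul_ne_zero hx (fun h => hx (hz0 x h)))
        (fun h => hx (hz0 x (hz0 (φ x) h)))
    have hNy : y * φ y * φ (φ y) ≠ 0 :=
      mul_ne_zero (mul_ne_zero hy (fun h => hy (hz0 y h)))
        (fun h => hy (hz0 y (hz0 (φ y) h)))
    have P1 := congrArg₂ (· * ·) (congrArg₂ (· * ·) A1 A2) A3
    have P2 := congrArg₂ (· * ·) (congrArg₂ (· * ·) A1y A2y) A3y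
    have Q1 : (r - (1-b^3)*b)*((φ r - (1-b^3)*b)*(φ (φ r) - (1-b^3)*b))
        = (b^2*r + (1-b^3))*((b^2*φ r + (1-b^3))*(b^2*φ (φ r) + (1-b^3))) := by
      apply mul_right_cancel₀ hNx
      linear_combination P1
    have Q2 : (r + (1-b^3)*b)*((φ r + (1-b^3)*b)*(φ (φ r) + (1-b^3)*b))
        = (b^2*r - (1-b^3))*((b^2*φ r - (1-b^3))*(b^2*φ (φ r) - (1-b^3))) := by
      apply mul_right_cancel₀ hNy
      linear_combination P2
    have hsum : (2:E)*(((1:E) - b^3)*(((1:E) + b^3)*(r * φ r * φ (φ r)))) = 0 := by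
      linear_combination Q1 + Q2
    have hn : r * φ r * φ (φ r) = 0 := by
      rcases mul_eq_zero.mp hsum with h | h
      · exact absurd h h2
      rcases mul_eq_zero.mp h with h | h
      · exact absurd h hc
      rcases mul_eq_zero.mp h with h | h
      · exact absurd h hc1
      · exact h
    have hr0 : r = 0 := by
      rcases mul_eq_zero.mp hn with h | h
      · rcases mul_eq_zero.mp h with h' | h'
        · exact h'
        · exact hz0 r h'
      · exact hz0 r (hz0 (φ r) h)
    rw [hr0, map_zero] at e1
    have hE10 : ((1:E)-b^3) * (x + b*φ x) = 0 := by linear_combination -e1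
    have hE1 : x + b*φ x = 0 := by
      rcases mul_eq_zero.mp hE10 with h | h
      · exact absurd h hc
      · exact h
    have hE2 : φ x + b*φ (φ x) = 0 := by
      have h := congrArg φ hE1
      simpa only [map_add, map_mul, map_zero, hbf] using h
    have hE3 : φ (φ x) + b*x = 0 := by
      have h := congrArg φ hE2
      simpa only [map_add, map_mul, map_zero, hbf, hφ3] using h
    have hfin : ((1:E)+b^3)*x = 0 := by linear_combination hE1 - b*hE2 + b^2*hE3
    rcases mul_eq_zero.mp hfin with h | h
    · exact hc1 h
    · exact hx h

/-- If `B ∈ F_q` with `B³ ≠ 1` then `f(x) = x (x^{q²} + B² x^q + B x)` is planar on `F_{q³}`. -/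
theorem stmt_8 (q : ℕ) (hp : IsPrimePow q) (hq : Odd q)
    (F E : Type*) [Field F] [Fintype F] [Field E] [Fintype E] [Algebra F E]
    (hF : Fintype.card F = q) (hE : Fintype.card E = q ^ 3)
    (B : F) (hB : B ^ 3 ≠ 1) :
    ∀ C : E, C ≠ 0 → Function.Bijective (fun x : E =>
      (x + C) * ((x + C) ^ (q ^ 2) + algebraMap F E (B ^ 2) * (x + C) ^ q
          + algebraMap F E B * (x + C))
        - x * (x ^ (q ^ 2) + algebraMap F E (B ^ 2) * x ^ q + algebraMap F E B * x)) := by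
  obtain ⟨p, k, hpp, hk, rfl⟩ := hp
  have hp' : p.Prime := hpp.nat_prime
  haveI : Fact p.Prime := ⟨hp'⟩
  -- characteristic of E is p
  have hpE : ((p : ℕ) : E) = 0 := by
    have h0 := FiniteField.cast_card_eq_zero E
    rw [hE] at h0
    push_cast at h0
    rw [← pow_mul] at h0
    exact (pow_eq_zero_iff (Nat.mul_ne_zero hk.ne' (by norm_num))).mp h0
  haveI : CharP E p := by
    have hc := ringChar.charP E
    rcases hp'.eq_one_or_self_of_dvd _ ((ringChar.spec E p).mp hpE) with h | h
    · exact absurd h (CharP.char_ne_one E (ringChar E))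
    · rwa [h] at hc
  have h2 : (2:E) ≠ 0 := by
    intro h
    have hdvd : p ∣ 2 := (CharP.cast_eq_zero_iff E p 2).mp (by exact_mod_cast h)
    have hp2 : p = 2 := (Nat.prime_dvd_prime_iff_eq hp' Nat.prime_two).mp hdvd
    have heven : Even (p^k) := Nat.even_pow.mpr ⟨by rw [hp2]; exact even_two, hk.ne'⟩
    exact (Nat.not_odd_iff_even.mpr heven) hq
  -- the Frobenius endomorphism x ↦ x^q
  let φ : E →+* E :=
    { toFun := fun z => z ^ p^k
      map_one' := one_pow _
      map_mul' := fun a c => mul_pow a c _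
      map_zero' := zero_pow (pow_ne_zero k hp'.pos.ne')
      map_add' := fun a c => add_pow_char_pow a c p k }
  have hφd : ∀ z : E, φ z = z ^ p^k := fun z => rfl
  have hφ3 : ∀ z : E, φ (φ (φ z)) = z := by
    intro z
    rw [hφd, hφd, hφd, ← pow_mul, ← pow_mul,
      show p^k * (p^k * p^k) = Fintype.card E by rw [hE]; ring]
    exact FiniteField.pow_card z
  have hbf : φ (algebraMap F E B) = algebraMap F E B := by
    rw [hφd, ← map_pow]
    congr 1
    rw [← hF]
    exact FiniteField.pow_card B
  have hb3 : (algebraMap F E B) ^ 3 ≠ 1 := by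
    rw [← map_pow, show (1:E) = algebraMap F E 1 from (map_one _).symm]
    exact fun h => hB ((algebraMap F E).injective h)
  have hpw1 : ∀ z : E, z ^ (p^k) = φ z := fun z => rfl
  have hpw2 : ∀ z : E, z ^ ((p^k)^2) = φ (φ z) := by
    intro z
    conv_rhs => rw [hφd, hφd, ← pow_mul]
    rw [pow_two]
  intro C hC
  have hfun : (fun x : E =>
      (x + C) * ((x + C) ^ ((p^k) ^ 2) + algebraMap F E (B ^ 2) * (x + C) ^ (p^k)
          + algebraMap F E B * (x + C))
        - x * (x ^ ((p^k) ^ 2) + algebraMap F E (B ^ 2) * x ^ (p^k) + algebraMap F E B * x))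
      = (fun x : E =>
      (C * (φ (φ x) + (algebraMap F E B)^2 * φ x + algebraMap F E B * x)
        + x * (φ (φ C) + (algebraMap F E B)^2 * φ C + algebraMap F E B * C))
        + C * (φ (φ C) + (algebraMap F E B)^2 * φ C + algebraMap F E B * C)) := by
    funext x
    simp only [map_pow, hpw1, hpw2, map_add]
    ring
  rw [hfun, ← Finite.injective_iff_bijective]
  intro u v huv
  by_contra hne
  have huv' : u - v ≠ 0 := sub_ne_zero.mpr hne
  apply stmt_8_core φ hφ3 h2 (algebraMap F E B) hbf hb3 (u - v) C huv' hC
  simp only [map_sub]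
  dsimp only at huv
  linear_combination huv
end

section
/- Let q be an odd prime power and B ∈ F_q with B³ = 1. Then f(x) = x(x^{q²} + B² x^q + B x) is not planar on F_{q³}. -/
/-- If `B ∈ F_q` with `B³ = 1` then `f(x) = x (x^{q²} + B² x^q + B x)` is not planar on `F_{q³}`. -/
theorem stmt_9 (q : ℕ) (hp : IsPrimePow q) (hq : Odd q)
    (F E : Type*) [Field F] [Fintype F] [Field E] [Fintype E] [Algebra F E]
    (hF : Fintype.card F = q) (hE : Fintype.card E = q ^ 3)
    (B : F) (hB : B ^ 3 = 1) :
    ¬ ∀ C : E, C ≠ 0 → Function.Bijective (fun x : E =>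
      (x + C) * ((x + C) ^ (q ^ 2) + algebraMap F E (B ^ 2) * (x + C) ^ q
          + algebraMap F E B * (x + C))
        - x * (x ^ (q ^ 2) + algebraMap F E (B ^ 2) * x ^ q + algebraMap F E B * x)) := by
  intro h
  obtain ⟨p, k, hpp, hk, rfl⟩ := hp
  have hpp' : p.Prime := hpp.nat_prime
  haveI : Fact p.Prime := ⟨hpp'⟩
  set q := p ^ k with hqdef
  have hq1 : 1 < q := Nat.one_lt_pow hk.ne' hpp'.one_lt
  -- characteristic of E is p
  have hcharE : CharP E p := by
    set r := ringChar E with hr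
    haveI : CharP E r := ringChar.charP E
    obtain ⟨n, hrp, hcard⟩ := FiniteField.card E r
    have hdvd : r ∣ q ^ 3 := by
      rw [← hE, hcard]
      exact dvd_pow_self r n.pos.ne'
    have hrP : r = p := by
      have : r ∣ p := hrp.dvd_of_dvd_pow (by simpa [hqdef, ← pow_mul] using hdvd)
      exact ((Nat.prime_dvd_prime_iff_eq hrp hpp').mp this)
    rwa [← hrP]
  haveI := hcharE
  set A : E := algebraMap F E B with hA
  have hA3 : A ^ 3 = 1 := by rw [hA, ← map_pow, hB, map_one]
  -- Frobenius facts
  have hadd : ∀ x y : E, (x + y) ^ q = x ^ q + y ^ q := fun x y => add_pow_char_pow x y p k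
  have hsub : ∀ x y : E, (x - y) ^ q = x ^ q - y ^ q := fun x y => sub_pow_char_pow x y k
  have hmulq : ∀ x y : E, (x * y) ^ q = x ^ q * y ^ q := fun x y => mul_pow x y q
  have hq2 : ∀ x : E, x ^ q ^ 2 = (x ^ q) ^ q := fun x => by
    have h2 : q ^ 2 = q * q := by ring
    rw [h2, pow_mul]
  have hq3 : ∀ x : E, (x ^ q ^ 2) ^ q = x := fun x => by
    rw [← pow_mul x (q ^ 2) q, ← pow_succ, ← hE, FiniteField.pow_card]
  have hAq : A ^ q = A := by
    rw [hA, ← map_pow, ← hF, FiniteField.pow_card]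
  have hA2q : (A ^ 2) ^ q = A ^ 2 := by
    calc (A ^ 2) ^ q = (A * A) ^ q := by ring
      _ = A ^ q * A ^ q := hmulq A A
      _ = A ^ 2 := by rw [hAq]; ring
  -- the linear map L
  set L : E → E := fun x => x ^ q ^ 2 + A ^ 2 * x ^ q + A * x with hL
  have h4 : A ^ 4 = A := by
    calc A ^ 4 = A ^ 3 * A := by ring
      _ = A := by rw [hA3, one_mul]
  have key : ∀ x : E, (L x) ^ q = A ^ 2 * L x := by
    intro x
    have e1 : (L x) ^ q = x + A ^ 2 * x ^ q ^ 2 + A * x ^ q := by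
      show (x ^ q ^ 2 + A ^ 2 * x ^ q + A * x) ^ q = _
      rw [hadd, hadd, hmulq, hmulq, hq3, hAq, hA2q, ← hq2]
    rw [e1, hL]
    simp only []
    linear_combination (-(x ^ q)) * h4 - x * hA3
  -- L is not injective
  have hLni : ¬ Function.Injective L := by
    intro hinj
    have hsurj : Function.Surjective L := Finite.surjective_of_injective hinj
    have hall : ∀ y : E, y ^ q = A ^ 2 * y := by
      intro y
      obtain ⟨x, rfl⟩ := hsurj y
      exact key x
    set P : Polynomial E := Polynomial.X ^ q - Polynomial.C (A ^ 2) * Polynomial.X with hP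
    have heval : ∀ y : E, P.eval y = 0 := by
      intro y
      simp [hP, hall y]
    have h1 : P.natDegree ≤ q := by
      refine le_trans (Polynomial.natDegree_sub_le _ _) (max_le (by simp) ?_)
      refine le_trans (Polynomial.natDegree_mul_le) ?_
      simp only [Polynomial.natDegree_C, Polynomial.natDegree_X]
      omega
    have hdeg : P.natDegree < Fintype.card E :=
      lt_of_le_of_lt h1 (by
        rw [hE]
        calc q = q ^ 1 := (pow_one q).symm
          _ < q ^ 3 := Nat.pow_lt_pow_right hq1 (by norm_num))
    have hP0 : P = 0 :=
      Polynomial.eq_zero_of_natDegree_lt_card_of_eval_eq_zero P Function.injective_id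
        (fun y => heval y) hdeg
    have hco : P.coeff q = 1 := by
      rw [hP, Polynomial.coeff_sub, Polynomial.coeff_X_pow, Polynomial.coeff_C_mul,
        Polynomial.coeff_X]
      simp [Nat.ne_of_lt hq1, Nat.ne_of_gt hq1]
    rw [hP0] at hco
    simp at hco
  -- extract a nonzero kernel element
  rw [Function.not_injective_iff] at hLni
  obtain ⟨a, b, hab, hne⟩ := hLni
  set c : E := a - b with hc
  have hc0 : c ≠ 0 := sub_ne_zero_of_ne hne
  have hLc : L c = 0 := by
    have e : L c = L a - L b := by
      show c ^ q ^ 2 + A ^ 2 * c ^ q + A * c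
          = (a ^ q ^ 2 + A ^ 2 * a ^ q + A * a) - (b ^ q ^ 2 + A ^ 2 * b ^ q + A * b)
      rw [hq2 c, hq2 a, hq2 b, hc, hsub a b, hsub (a ^ q) (b ^ q)]
      ring
    rw [e, hab, sub_self]
  -- contradiction with planarity at C = c
  have hbij := h c hc0
  have hmap : ∀ x : E, (x + c) * L (x + c) - x * L x =
      (x + c) * ((x + c) ^ (q ^ 2) + algebraMap F E (B ^ 2) * (x + c) ^ q
          + algebraMap F E B * (x + c))
        - x * (x ^ (q ^ 2) + algebraMap F E (B ^ 2) * x ^ q + algebraMap F E B * x) := by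
    intro x
    rw [hL]
    simp only [map_pow, ← hA]
  have hLcc : L (c + c) = 0 := by
    show (c + c) ^ q ^ 2 + A ^ 2 * (c + c) ^ q + A * (c + c) = 0
    rw [hq2, hadd, hadd]
    have e : (c ^ q) ^ q + (c ^ q) ^ q + A ^ 2 * (c ^ q + c ^ q) + A * (c + c)
        = ((c ^ q) ^ q + A ^ 2 * c ^ q + A * c) + ((c ^ q) ^ q + A ^ 2 * c ^ q + A * c) := by
      ring
    rw [e, ← hq2]
    have e2 : c ^ q ^ 2 + A ^ 2 * c ^ q + A * c = L c := rfl
    rw [e2, hLc, add_zero]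
  have hD0 : (0 + c) * L (0 + c) - 0 * L 0 = 0 := by
    rw [zero_add, hLc]; ring
  have hDc : (c + c) * L (c + c) - c * L c = 0 := by
    rw [hLcc, hLc]; ring
  have hL0 : L 0 = 0 := by
    show (0 : E) ^ q ^ 2 + A ^ 2 * (0 : E) ^ q + A * 0 = 0
    rw [zero_pow (by positivity : q ^ 2 ≠ 0), zero_pow (by omega : q ≠ 0)]
    ring
  clear_value c L
  have : c = 0 := by
    apply hbij.1
    simp only [hA, ← hmap]
    rw [zero_add, hLcc, hLc, hL0]
    ring
  exact hc0 this
end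

section
/- Let q be an odd prime power and A, B ∈ F_q with A³ - 2AB + 1 = 0 and A³ = 1 (or A³ = -1). Then f_{A,B}(x) = x(x^{q²} + A x^q + B x) is not planar on F_{q³}. -/
/-- If `A³ - 2AB + 1 = 0` and `A³ = 1` or `A³ = -1`, then
`f_{A,B}(x) = x (x^{q²} + A x^q + B x)` is not planar on `F_{q³}`. -/
theorem stmt_10 (q : ℕ) (hp : IsPrimePow q) (hq : Odd q)
    (F E : Type*) [Field F] [Fintype F] [Field E] [Fintype E] [Algebra F E]
    (hF : Fintype.card F = q) (hE : Fintype.card E = q ^ 3)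
    (A B : F) (h : A ^ 3 - 2 * A * B + 1 = 0) (h1 : A ^ 3 = 1 ∨ A ^ 3 = -1) :
    ¬ ∀ C : E, C ≠ 0 → Function.Bijective (fun x : E =>
        (x + C) * ((x + C) ^ (q ^ 2) + algebraMap F E A * (x + C) ^ q
            + algebraMap F E B * (x + C))
          - x * (x ^ (q ^ 2) + algebraMap F E A * x ^ q + algebraMap F E B * x)) := by
  intro hplanar
  classical
  obtain ⟨p, k, hpp, hk, hpk⟩ := hp
  have hpp' : p.Prime := hpp.nat_prime
  haveI : Fact p.Prime := ⟨hpp'⟩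
  have hq2 : 2 ≤ q := by
    rw [← hpk]
    calc 2 ≤ p := hpp'.two_le
    _ = p ^ 1 := (pow_one p).symm
    _ ≤ p ^ k := Nat.pow_le_pow_right hpp'.pos hk
  -- characteristic of E is p
  have hcharE : CharP E p := by
    obtain ⟨n, hnp, hcard⟩ := FiniteField.card E (ringChar E)
    have h1' : ringChar E ^ (n : ℕ) = p ^ (3 * k) := by
      rw [← hcard, hE, ← hpk, ← pow_mul]; ring_nf
    have hdvd : ringChar E ∣ p ^ (3 * k) := by
      rw [← h1']
      exact dvd_pow_self _ (by positivity)
    have := (Nat.prime_dvd_prime_iff_eq hnp hpp').mp (hnp.dvd_of_dvd_pow hdvd)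
    rw [← this]
    exact ringChar.charP E
  -- Frobenius additivity for exponent q
  have addq : ∀ u v : E, (u + v) ^ q = u ^ q + v ^ q := by
    intro u v
    rw [← hpk]
    exact add_pow_char_pow (p := p) (n := k) u v
  have addq2 : ∀ u v : E, (u + v) ^ q ^ 2 = u ^ q ^ 2 + v ^ q ^ 2 := by
    intro u v
    rw [pow_two, pow_mul, pow_mul, pow_mul, addq, addq]
  -- elements of F are fixed by x ↦ x^q
  have halg : ∀ a : F, (algebraMap F E a) ^ q = algebraMap F E a := by
    intro a
    rw [← map_pow]
    congr 1
    rw [← hF]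
    exact FiniteField.pow_card a
  have halg2 : ∀ a : F, (algebraMap F E a) ^ q ^ 2 = algebraMap F E a := by
    intro a
    rw [pow_two, pow_mul, halg, halg]
  have f3 : ∀ y : E, y ^ q ^ 3 = y := by
    intro y
    rw [← hE]
    exact FiniteField.pow_card y
  have pq2q : ∀ y : E, (y ^ q ^ 2) ^ q = y := by
    intro y
    rw [← pow_mul, ← pow_succ]
    exact f3 y
  have pqq2 : ∀ y : E, (y ^ q) ^ q ^ 2 = y := by
    intro y
    rw [← pow_mul, ← pow_succ']
    exact f3 y
  have pqq : ∀ y : E, (y ^ q) ^ q = y ^ q ^ 2 := by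
    intro y
    rw [← pow_mul, ← pow_two]
  have pq2q2 : ∀ y : E, (y ^ q ^ 2) ^ q ^ 2 = y ^ q := by
    intro y
    rw [← pow_mul]
    have : q ^ 2 * q ^ 2 = q ^ 3 * q := by ring
    rw [this, pow_mul, f3]
  -- 2 ≠ 0 in F since q is odd
  have h2F : (2 : F) ≠ 0 := by
    intro h2
    have hdvd : ringChar F ∣ 2 := by
      have := (CharP.cast_eq_zero_iff F (ringChar F) 2).mpr
      exact (CharP.cast_eq_zero_iff F (ringChar F) 2).mp (by exact_mod_cast h2)
    have hr2 : ringChar F = 2 := by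
      rcases (Nat.dvd_prime Nat.prime_two).mp hdvd with h' | h'
      · exact absurd h' (CharP.ringChar_ne_one)
      · exact h'
    have := FiniteField.even_card_of_char_two hr2
    rw [hF] at this
    rw [Nat.odd_iff] at hq
    omega
  -- the key construction
  have key : ∀ c d : F, d + A * c + B = 0 → 1 + A * d + B * c = 0 →
      c + A + B * d = 0 → False := by
    intro c d hc1 hc2 hc3
    set A' := algebraMap F E A with hA'
    set B' := algebraMap F E B with hB'
    set c' := algebraMap F E c with hc'
    set d' := algebraMap F E d with hd'
    -- find x₀ with x₀^{q²} + c' x₀^q + d' x₀ ≠ 0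
    obtain ⟨x, hx⟩ : ∃ x : E, x ^ q ^ 2 + c' * x ^ q + d' * x ≠ 0 := by
      by_contra hall
      push_neg at hall
      set P₀ : Polynomial E := Polynomial.X ^ q ^ 2 + Polynomial.C c' * Polynomial.X ^ q
        + Polynomial.C d' * Polynomial.X with hP₀
      have hPev : ∀ x : E, P₀.eval x = 0 := by
        intro x
        simpa [hP₀] using hall x
      have hdeg : P₀.natDegree < Fintype.card E := by
        have h1d : P₀.natDegree ≤ q ^ 2 := by
          refine le_trans (Polynomial.natDegree_add_le _ _) ?_
          simp only [max_le_iff]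
          constructor
          · refine le_trans (Polynomial.natDegree_add_le _ _) ?_
            simp only [max_le_iff, Polynomial.natDegree_X_pow, le_refl, true_and]
            refine le_trans (Polynomial.natDegree_C_mul_le _ _) ?_
            rw [Polynomial.natDegree_X_pow]
            nlinarith [hq2]
          · refine le_trans (Polynomial.natDegree_C_mul_le _ _) ?_
            rw [Polynomial.natDegree_X]
            nlinarith [hq2]
        calc P₀.natDegree ≤ q ^ 2 := h1d
        _ < q ^ 3 := by nlinarith [hq2, sq_nonneg q]
        _ = Fintype.card E := hE.symm
      have hP0 : P₀ = 0 :=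
        Polynomial.eq_zero_of_natDegree_lt_card_of_eval_eq_zero P₀
          Function.injective_id (fun x => hPev x) hdeg
      have hqlt : q < q ^ 2 := by nlinarith [hq2]
      have hc := congrArg (fun P => Polynomial.coeff P (q ^ 2)) hP0
      simp [hP₀, Polynomial.coeff_X_pow, Polynomial.coeff_X, hqlt.ne, hqlt.ne',
        (show (1:ℕ) ≠ q ^ 2 by omega), (show q ^ 2 ≠ 1 by omega)] at hc
    set Cv := x ^ q ^ 2 + c' * x ^ q + d' * x with hCv
    -- Cv is a root of X^{q²} + A X^q + B X
    have hCq : Cv ^ q = x + c' * x ^ q ^ 2 + d' * x ^ q := by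
      rw [hCv, addq, addq, mul_pow, mul_pow, halg, halg, pq2q, pqq]
    have hCq2 : Cv ^ q ^ 2 = x ^ q + c' * x + d' * x ^ q ^ 2 := by
      rw [hCv, addq2, addq2, mul_pow, mul_pow, halg2, halg2, pq2q2, pqq2]
    have hc1' : d' + A' * c' + B' = 0 := by
      have := congrArg (algebraMap F E) hc1
      rw [map_zero, map_add, map_add, map_mul] at this
      exact this
    have hc2' : 1 + A' * d' + B' * c' = 0 := by
      have := congrArg (algebraMap F E) hc2
      rw [map_zero, map_add, map_add, map_mul, map_mul, map_one] at this
      exact this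
    have hc3' : c' + A' + B' * d' = 0 := by
      have := congrArg (algebraMap F E) hc3
      rw [map_zero, map_add, map_add, map_mul] at this
      exact this
    have hPC : Cv ^ q ^ 2 + A' * Cv ^ q + B' * Cv = 0 := by
      rw [hCq2, hCq, hCv]
      linear_combination x ^ q ^ 2 * hc1' + x ^ q * hc2' + x * hc3'
    -- now contradict planarity
    have hbij := hplanar Cv hx
    have heq : (Cv + Cv) * ((Cv + Cv) ^ q ^ 2 + A' * (Cv + Cv) ^ q + B' * (Cv + Cv))
        - Cv * (Cv ^ q ^ 2 + A' * Cv ^ q + B' * Cv)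
        = (0 + Cv) * ((0 + Cv) ^ q ^ 2 + A' * (0 + Cv) ^ q + B' * (0 + Cv))
        - 0 * ((0:E) ^ q ^ 2 + A' * (0:E) ^ q + B' * 0) := by
      rw [addq2, addq, zero_add]
      linear_combination (2 * Cv) * hPC
    have := hbij.injective heq
    exact hx this
  -- case analysis on A³ = ±1
  rcases h1 with h1 | h1
  · -- A³ = 1, so A B = 1 and B = A²
    have hAB : A * B = 1 := by
      have h3 : 2 * (A * B - 1) = 0 := by linear_combination -h + h1
      rcases mul_eq_zero.mp h3 with h' | h'
      · exact absurd h' h2F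
      · exact sub_eq_zero.mp h'
    have hB : B = A ^ 2 := by
      have : B * A ^ 3 = A ^ 2 * (A * B) := by ring
      rw [h1, hAB] at this
      simpa using this
    exact key (-A) 0 (by rw [hB]; ring) (by rw [hB]; linear_combination -h1)
      (by rw [hB]; ring)
  · -- A³ = -1, so B = 0
    have hA0 : A ≠ 0 := by
      intro h'
      have : (1 : F) = 0 := by linear_combination h1 - A ^ 2 * h'
      exact one_ne_zero this
    have hB : B = 0 := by
      have h2 : 2 * (A * B) = 0 := by linear_combination -h + h1
      rcases mul_eq_zero.mp h2 with h' | h'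
      · exact absurd h' h2F
      · rcases mul_eq_zero.mp h' with h'' | h''
        · exact absurd h'' hA0
        · exact h''
    exact key (-A) (A ^ 2) (by rw [hB]; ring) (by rw [hB]; linear_combination h1)
      (by rw [hB]; ring)
end

section
/- Let q be an odd prime power, A, B ∈ F_q, and let F_{A,B}(X,Y) = 2AB(X³+Y³+1) + (2A²B+4B²)(X+Y²+X²Y) + (4AB²+2B)(X²+Y+XY²) + (2A³+8B³+2)XY. If A - 2B + 1 = 0, or (A,B) = (1,1), or (A,B) = (1,-1/2), then (X + Y + 1) divides F_{A,B}(X,Y) in F_q[X,Y]. -/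
open MvPolynomial

/-- If `A - 2B + 1 = 0`, or `(A,B) = (1,1)`, or `(A,B) = (1,-1/2)`, then `X + Y + 1`
divides `F_{A,B}(X,Y)` in `F_q[X,Y]`. -/
theorem stmt_13 (q : ℕ) (hp : IsPrimePow q) (hq : Odd q)
    (F : Type*) [Field F] [Fintype F] (hF : Fintype.card F = q)
    (A B : F)
    (h : A - 2 * B + 1 = 0 ∨ (A = 1 ∧ B = 1) ∨ (A = 1 ∧ B = -(1 / 2))) :
    ((X 0 : MvPolynomial (Fin 2) F) + X 1 + 1) ∣
      (C (2 * A * B) * ((X 0 : MvPolynomial (Fin 2) F) ^ 3 + X 1 ^ 3 + 1)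
        + C (2 * A ^ 2 * B + 4 * B ^ 2) * (X 0 + X 1 ^ 2 + X 0 ^ 2 * X 1)
        + C (4 * A * B ^ 2 + 2 * B) * (X 0 ^ 2 + X 1 + X 0 * X 1 ^ 2)
        + C (2 * A ^ 3 + 8 * B ^ 3 + 2) * (X 0 * X 1)) := by
  -- 2 ≠ 0 in F
  have h2 : (2 : F) ≠ 0 := by
    intro h20
    have hchar : ringChar F = 2 := by
      have hdvd : ringChar F ∣ 2 := (CharP.cast_eq_zero_iff F (ringChar F) 2).mp (by
        exact_mod_cast h20)
      rcases (Nat.dvd_prime Nat.prime_two).mp hdvd with h1 | h1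
      · exact absurd h1 CharP.ringChar_ne_one
      · exact h1
    have := FiniteField.even_card_of_char_two hchar
    rw [hF] at this
    rw [Nat.odd_iff] at hq
    omega
  -- key scalar identities
  have hc : 4 * A * B ^ 2 + 2 * B = 2 * A ^ 2 * B + 4 * B ^ 2 := by
    rcases h with h | ⟨hA, hB⟩ | ⟨hA, hB⟩
    · linear_combination (-2 * B * (A - 1)) * h
    · subst hA hB; ring
    · subst hA hB; field_simp; ring
  have hd : 2 * A ^ 3 + 8 * B ^ 3 + 2 =
      3 * ((2 * A ^ 2 * B + 4 * B ^ 2) - 2 * A * B) := by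
    rcases h with h | ⟨hA, hB⟩ | ⟨hA, hB⟩
    · linear_combination (2 * (A ^ 2 + (-B - 1) * A + (-2 * B ^ 2 + 2 * B + 1))) * h
    · subst hA hB; ring
    · subst hA hB; field_simp; ring
  have hc' : (C (4 * A * B ^ 2 + 2 * B) : MvPolynomial (Fin 2) F)
      = C (2 * A ^ 2 * B + 4 * B ^ 2) := by rw [hc]
  have hd' : (C (2 * A ^ 3 + 8 * B ^ 3 + 2) : MvPolynomial (Fin 2) F)
      = 3 * (C (2 * A ^ 2 * B + 4 * B ^ 2) - C (2 * A * B)) := by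
    rw [hd, map_mul, map_sub, map_ofNat]
  rw [hc', hd']
  refine ⟨C (2 * A * B) * ((X 0 : MvPolynomial (Fin 2) F) ^ 2 + X 1 ^ 2 + 1)
      + C ((2 * A ^ 2 * B + 4 * B ^ 2) - 2 * A * B) * (X 0 * X 1 + X 0 + X 1), ?_⟩
  rw [map_sub]
  ring
end

section
/- Let q be an odd prime power and B ∈ F_q nonzero with 8B³ + 1 = 0. Then f(x) = x(x^{q²} + B x) is not planar on F_{q³}. -/
open Polynomial


/-- Vieta for a monic cubic with three distinct roots. -/
lemma vieta3 {K : Type*} [Field K] {a b c P Q R : K} (hab : a ≠ b) (hac : a ≠ c) (hbc : b ≠ c)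
    (ha : a^3 + P*a^2 + Q*a + R = 0) (hb : b^3 + P*b^2 + Q*b + R = 0)
    (hc : c^3 + P*c^2 + Q*c + R = 0) :
    a*b*c = -R ∧ (1-a)*(1-b)*(1-c) = 1 + P + Q + R := by
  have h1 : a^2 + a*b + b^2 + P*(a+b) + Q = 0 :=
    mul_left_cancel₀ (sub_ne_zero.mpr hab) (by linear_combination ha - hb)
  have h2 : a^2 + a*c + c^2 + P*(a+c) + Q = 0 :=
    mul_left_cancel₀ (sub_ne_zero.mpr hac) (by linear_combination ha - hc)
  have hP : a + b + c + P = 0 :=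
    mul_left_cancel₀ (sub_ne_zero.mpr hbc) (by linear_combination h1 - h2)
  have hQ : Q = a*b + a*c + b*c := by linear_combination h1 - (a+b)*hP
  have hR : R = -(a*b*c) := by
    linear_combination ha - a^2*hP - a*hQ
  constructor
  · linear_combination hR
  · linear_combination -hP - hQ - hR

/-- In `E` with `q³` elements, every `(q²+q+1)`-th root of unity is a `(q²-1)`-th power. -/
lemma exists_pow_root {E : Type*} [Field E] [Fintype E] {q : ℕ} (hq : 1 ≤ q)
    (hE : Fintype.card E = q ^ 3) (u : E) (hu : u ^ (q^2 + q + 1) = 1) :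
    ∃ C : E, C ≠ 0 ∧ C ^ (q^2 - 1) = u := by
  classical
  have hu0 : u ≠ 0 := by
    rintro rfl
    rw [zero_pow (by positivity)] at hu
    exact zero_ne_one hu
  set uu : Eˣ := Units.mk0 u hu0 with huu
  obtain ⟨g, hg⟩ := IsCyclic.exists_monoid_generator (α := Eˣ)
  obtain ⟨k, hk'⟩ := hg uu
  have hk : g ^ k = uu := hk'
  have hcard : Fintype.card Eˣ = q^3 - 1 := by rw [Fintype.card_units, hE]
  have horder : orderOf g = q^3 - 1 := by
    rw [← hcard, ← Nat.card_eq_fintype_card]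
    apply orderOf_eq_card_of_forall_mem_zpowers
    intro x
    obtain ⟨n, hn⟩ := hg x
    exact ⟨(n : ℤ), by simpa using hn⟩
  have huu1 : uu ^ (q^2 + q + 1) = 1 := by
    ext
    simpa [huu] using hu
  have hdvd : (q^3 - 1) ∣ k * (q^2 + q + 1) := by
    rw [← horder]
    apply orderOf_dvd_of_pow_eq_one
    rw [pow_mul, hk, huu1]
  have fact1 : q^3 - 1 = (q-1) * (q^2+q+1) := by
    obtain ⟨m, rfl⟩ : ∃ m, q = m + 1 := ⟨q - 1, by omega⟩
    have h3 : (m+1)^3 = m^3+3*m^2+3*m + 1 := by ring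
    have : m * ((m+1)^2+(m+1)+1) = m^3+3*m^2+3*m := by ring
    simp only [Nat.add_sub_cancel]
    omega
  have hd2 : (q - 1) ∣ k := by
    rw [fact1] at hdvd
    exact (Nat.mul_dvd_mul_iff_right (show 0 < q^2+q+1 by positivity)).mp hdvd
  obtain ⟨k', rfl⟩ := hd2
  clear hk'
  refine ⟨((g ^ (k' * (q^2+1)) : Eˣ) : E), Units.ne_zero _, ?_⟩
  have hexp : k' * (q^2+1) * (q^2 - 1) = (q^3 - 1) * (k' * q) + (q-1) * k' := by
    obtain ⟨m, rfl⟩ : ∃ m, q = m + 1 := ⟨q - 1, by omega⟩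
    have h2 : (m+1)^2 - 1 = m^2+2*m := by
      have : (m+1)^2 = m^2+2*m+1 := by ring
      omega
    have h3 : (m+1)^3 - 1 = m^3+3*m^2+3*m := by
      have : (m+1)^3 = m^3+3*m^2+3*m+1 := by ring
      omega
    simp only [Nat.add_sub_cancel, h2, h3]
    ring
  have : (g ^ (k' * (q^2+1))) ^ (q^2 - 1) = g ^ ((q-1) * k') := by
    rw [← pow_mul, hexp, pow_add, pow_mul, ← hcard, pow_card_eq_one, one_pow, one_mul]
  calc ((g ^ (k' * (q^2+1)) : Eˣ) : E) ^ (q^2-1)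
      = (((g ^ (k' * (q^2+1))) ^ (q^2-1) : Eˣ) : E) := by norm_cast
    _ = ((g ^ ((q-1)*k') : Eˣ) : E) := by rw [this]
    _ = u := by rw [hk]; simp [huu]


/-- In any field `E` with a hom from a field `F` of cardinality `q`, the solutions of
`x^q = x` are exactly the image of `F`. -/
lemma mem_range_of_pow_eq {F E : Type*} [Field F] [Fintype F] [Field E] {q : ℕ}
    (hq : 2 ≤ q) (hF : Fintype.card F = q) (ψ : F →+* E) (x : E) (hx : x ^ q = x) :
    ∃ r : F, ψ r = x := by
  classical
  by_contra h
  push_neg at h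
  set f : Polynomial E := X ^ q - X with hfdef
  have hfd : f.natDegree = q := by
    rw [hfdef]
    rw [natDegree_sub_eq_left_of_natDegree_lt] <;> simp [natDegree_X_pow] <;> omega
  have hf0 : f ≠ 0 := by
    intro h0
    rw [h0, natDegree_zero] at hfd
    omega
  set S : Finset E := insert x (Finset.univ.image ψ) with hS
  have hxS : x ∉ Finset.univ.image ψ := by
    simp only [Finset.mem_image]
    rintro ⟨r, -, hr⟩
    exact h r hr
  have hcardS : S.card = q + 1 := by
    rw [hS, Finset.card_insert_of_notMem hxS,
      Finset.card_image_of_injective _ ψ.injective, Finset.card_univ, hF]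
  have hsub : S ⊆ f.roots.toFinset := by
    intro y hy
    rw [Multiset.mem_toFinset, mem_roots hf0]
    rw [hS, Finset.mem_insert] at hy
    rcases hy with rfl | hy
    · simp [hfdef, IsRoot, hx]
    · obtain ⟨r, -, rfl⟩ := Finset.mem_image.mp hy
      have : r ^ q = r := by rw [← hF]; exact FiniteField.pow_card r
      simp [hfdef, IsRoot, ← map_pow, this]
  have := Finset.card_le_card hsub
  have h2 := Multiset.toFinset_card_le f.roots
  have h3 := f.card_roots'
  omega


/-- If the cubic `x³ - αx² + (α+1)x - 1` has no root in the field `F` of cardinality `q`,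
then it has a root in a field `E` of cardinality `q³`, via some ring hom `ψ : F →+* E`. -/
lemma exists_cubic_root {F E : Type*} [Field F] [Fintype F] [Field E] [Fintype E] {q : ℕ}
    (hq : 2 ≤ q) (hF : Fintype.card F = q) (hE : Fintype.card E = q ^ 3) (α : F)
    (hα : ∀ r : F, r^3 - α*r^2 + (α+1)*r - 1 ≠ 0) :
    ∃ (ψ : F →+* E) (t : E), t^3 - ψ α * t^2 + (ψ α + 1) * t - 1 = 0 := by
  classical
  set pF : F[X] := X^3 - C α * X^2 + C (α+1) * X - 1 with hpFdef
  have hdeg : pF.natDegree = 3 := by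
    rw [hpFdef]
    compute_degree!
  have hpF0 : pF ≠ 0 := fun h0 => by rw [h0, natDegree_zero] at hdeg; omega
  have hnoroot : ∀ r : F, ¬ pF.IsRoot r := by
    intro r hr
    apply hα r
    simpa [hpFdef, IsRoot] using hr
  obtain ⟨i, hi_irr, hi_dvd⟩ :=
    WfDvdMonoid.exists_irreducible_factor (not_isUnit_of_natDegree_pos pF (by omega)) hpF0
  obtain ⟨j, hj⟩ := id hi_dvd
  have hi0 : i ≠ 0 := hi_irr.ne_zero
  have hj0 : j ≠ 0 := fun h0 => hpF0 (by rw [hj, h0, mul_zero])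
  have hdegs : i.natDegree + j.natDegree = 3 := by
    rw [← natDegree_mul hi0 hj0, ← hj, hdeg]
  have hipos : 0 < i.natDegree := hi_irr.natDegree_pos
  -- a linear factor would give a root of pF in F
  have hnolin : ∀ g : F[X], g ∣ pF → g.natDegree ≠ 1 := by
    intro g hg hg1
    have hg0 : g ≠ 0 := fun h0 => by simp [h0] at hg1
    obtain ⟨x, hx⟩ := exists_root_of_degree_eq_one
      ((degree_eq_iff_natDegree_eq hg0).mpr hg1)
    exact hnoroot x (hx.dvd hg)
  have hjne : j.natDegree ≠ 1 := hnolin j ⟨i, by rw [hj, mul_comm]⟩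
  have hine : i.natDegree ≠ 1 := hnolin i ⟨j, hj⟩
  have hideg3 : i.natDegree = 3 := by
    rcases Nat.lt_or_ge i.natDegree 3 with h3 | h3
    · interval_cases h : i.natDegree <;> omega
    · omega
  -- build the field K = F[X]/(i)
  haveI : Fact (Irreducible i) := ⟨hi_irr⟩
  let K := AdjoinRoot i
  let pb : PowerBasis F K := AdjoinRoot.powerBasis hi0
  haveI : Fintype K := Module.fintypeOfFintype pb.basis
  have hcardK : Fintype.card K = q ^ 3 := by
    rw [Module.card_fintype pb.basis, hF, Fintype.card_fin, AdjoinRoot.powerBasis_dim, hideg3]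
  let e : K ≃+* E := FiniteField.ringEquivOfCardEq (by rw [hcardK, hE])
  refine ⟨e.toRingHom.comp (AdjoinRoot.of i), e.toRingHom (AdjoinRoot.root i), ?_⟩
  have h1 : pF.eval₂ (AdjoinRoot.of i) (AdjoinRoot.root i) = 0 := by
    rw [hj, eval₂_mul, AdjoinRoot.eval₂_root, zero_mul]
  have h2 := congrArg e.toRingHom h1
  rw [hom_eval₂, map_zero] at h2
  simp only [hpFdef, eval₂_sub, eval₂_add, eval₂_mul, eval₂_pow, eval₂_X, eval₂_C,
    eval₂_one, map_add, map_one] at h2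
  linear_combination h2

/-- If `B ∈ F_q` is nonzero with `8B³ + 1 = 0` then `f(x) = x (x^{q²} + B x)` is not
planar on `F_{q³}`. -/
theorem stmt_18 (q : ℕ) (hp : IsPrimePow q) (hq : Odd q)
    (F E : Type*) [Field F] [Fintype F] [Field E] [Fintype E] [Algebra F E]
    (hF : Fintype.card F = q) (hE : Fintype.card E = q ^ 3)
    (B : F) (hB0 : B ≠ 0) (hB : 8 * B ^ 3 + 1 = 0) :
    ¬ ∀ C : E, C ≠ 0 → Function.Bijective (fun x : E =>
        (x + C) * ((x + C) ^ (q ^ 2) + algebraMap F E B * (x + C))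
          - x * (x ^ (q ^ 2) + algebraMap F E B * x)) := by
  classical
  have hq2 : 2 ≤ q := hp.two_le
  -- characteristic of E
  obtain ⟨pp, n, hppP, hn, hqeq⟩ := hp
  have hppN : Nat.Prime pp := Nat.prime_iff.mpr hppP
  haveI := Fact.mk hppN
  haveI hCharE : CharP E pp := by
    obtain ⟨r, hr⟩ := CharP.exists E
    haveI := hr
    have hrP : Nat.Prime r := CharP.char_is_prime E r
    obtain ⟨m, hm1, hm2⟩ := FiniteField.card E r
    have : r = pp := by
      have hdvd : r ∣ q ^ 3 := by
        rw [← hE, hm2]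
        exact dvd_pow_self r (by positivity)
      have h1 : r ∣ q := hrP.dvd_of_dvd_pow hdvd
      rw [← hqeq] at h1
      have h2 : r ∣ pp := hrP.dvd_of_dvd_pow h1
      exact (Nat.prime_dvd_prime_iff_eq hrP hppN).mp h2
    rwa [this] at hr
  -- freshman's dream for exponent q in E
  have hadd : ∀ x y : E, (x + y) ^ q = x ^ q + y ^ q := by
    intro x y
    rw [← hqeq]
    exact add_pow_char_pow x y pp n
  have hadd2 : ∀ x y : E, (x + y) ^ (q ^ 2) = x ^ (q ^ 2) + y ^ (q ^ 2) := by
    intro x y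
    have h1 : q ^ 2 = q * q := by ring
    rw [h1, pow_mul, pow_mul, pow_mul, hadd, hadd]
  have hsub : ∀ x y : E, (x - y) ^ q = x ^ q - y ^ q := by
    intro x y
    have := hadd (x - y) y
    rw [sub_add_cancel] at this
    linear_combination -this
  -- x ↦ x^q is injective on E
  have hfrobinj : ∀ x y : E, x ^ q = y ^ q → x = y := by
    intro x y hxy
    have h1 : (x - y) ^ q = 0 := by rw [hsub, hxy, sub_self]
    have h2 : x - y = 0 := pow_eq_zero_iff (by omega) |>.mp h1
    exact sub_eq_zero.mp h2
  -- choose α with the cubic x³ - αx² + (α+1)x - 1 having no root in F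
  obtain ⟨α, hα⟩ : ∃ α : F, ∀ r : F, r^3 - α*r^2 + (α+1)*r - 1 ≠ 0 := by
    set g : F → F := fun r => (1 - r - r^3) / (r - r^2) with hg
    have hginj : ¬ Function.Injective g := by
      intro hinj
      have h01 : g 0 = g 1 := by simp [hg]
      exact zero_ne_one (hinj h01)
    have hgsurj : ¬ Function.Surjective g := fun hs =>
      hginj (Finite.injective_iff_surjective.mpr hs)
    unfold Function.Surjective at hgsurj
    push_neg at hgsurj
    obtain ⟨α, hαr⟩ := hgsurj
    refine ⟨α, fun r hr => ?_⟩
    have hr0 : r ≠ 0 := by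
      rintro rfl
      simp at hr
    have hr1 : r ≠ 1 := by
      rintro rfl
      rw [show (1:F)^3 - α*1^2 + (α+1)*1 - 1 = 1 by ring] at hr
      exact one_ne_zero hr
    have hden : r - r^2 ≠ 0 := by
      intro h0
      have : r * (1 - r) = 0 := by linear_combination h0
      rcases mul_eq_zero.mp this with h | h
      · exact hr0 h
      · exact hr1 (by linear_combination -h)
    apply hαr r
    show (1 - r - r^3) / (r - r^2) = α
    rw [div_eq_iff hden]
    linear_combination -hr
  -- get a root t of the cubic in E
  obtain ⟨ψ, t, ht⟩ := exists_cubic_root hq2 hF hE α hα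
  set a : E := ψ α with ha_def
  have hψfix : ∀ r : F, (ψ r) ^ q = ψ r := by
    intro r
    rw [← map_pow, ← hF, FiniteField.pow_card]
  have hafix : a ^ q = a := hψfix α
  -- conjugate roots
  have hφ : ∀ x : E, (iterateFrobenius E pp n) x = x ^ q := by
    intro x
    rw [iterateFrobenius_def, hqeq]
  have hconj : ∀ s : E, s^3 - a*s^2 + (a+1)*s - 1 = 0 →
      (s^q)^3 - a*(s^q)^2 + (a+1)*(s^q) - 1 = 0 := by
    intro s hs
    have h2 := congrArg (iterateFrobenius E pp n) hs
    simp only [map_sub, map_add, map_mul, map_pow, map_one, map_zero] at h2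
    simp only [hφ] at h2
    rw [hafix] at h2
    exact h2
  have ht2 := hconj t ht
  have ht3 := hconj _ ht2
  -- t is not fixed by frobenius
  have htne : t ^ q ≠ t := by
    intro hfix
    obtain ⟨r, hr⟩ := mem_range_of_pow_eq hq2 hF ψ t hfix
    apply hα r
    have : ψ (r^3 - α*r^2 + (α+1)*r - 1) = 0 := by
      simp only [map_sub, map_add, map_mul, map_pow, map_one]
      rw [hr]
      exact ht
    exact (_root_.map_eq_zero ψ).mp this
  have htq3 : ((t ^ q) ^ q) ^ q = t := by
    rw [← pow_mul, ← pow_mul, show q * (q * q) = q ^ 3 by ring, ← hE, FiniteField.pow_card]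
  have hab : t ≠ t ^ q := fun h => htne h.symm
  have hac : t ≠ (t ^ q) ^ q := by
    intro h
    apply htne
    calc t ^ q = (((t ^ q) ^ q) ^ q) := by rw [← h]
    _ = t := htq3
  have hbc : t ^ q ≠ (t ^ q) ^ q := by
    intro h
    exact hab (hfrobinj t (t^q) h)
  -- Vieta
  obtain ⟨hN, hM⟩ := vieta3 (P := -a) (Q := a+1) (R := -1) hab hac hbc
    (by linear_combination ht) (by linear_combination ht2) (by linear_combination ht3)
  have hN' : t * t ^ q * (t ^ q) ^ q = 1 := by rw [hN]; ring
  have hM' : (1 - t) * (1 - t ^ q) * (1 - (t ^ q) ^ q) = 1 := by rw [hM]; ring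
  -- the element w = -2B
  set b : E := algebraMap F E B with hb_def
  have hw_alg : -(2*b) = algebraMap F E (-(2*B)) := by
    rw [map_neg, map_mul, map_ofNat, ← hb_def]
  have hwq : (-(2*b)) ^ q = -(2*b) := by
    rw [hw_alg, ← map_pow, ← hF, FiniteField.pow_card]
  have hw3 : (-(2*b)) ^ 3 = 1 := by
    have h8 : (8:F) * B^3 = -1 := by linear_combination hB
    have h9 := congrArg (algebraMap F E) h8
    rw [map_mul, map_pow, map_neg, map_one] at h9
    rw [show ((algebraMap F E) (8:F)) = (8:E) by rw [map_ofNat]] at h9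
    linear_combination -h9
  -- the two norm-one elements u = w*t and v = w*(1-t)
  have hqsplit : q ^ 2 + q + 1 = q * q + q + 1 := by ring
  have hormula : ∀ x : E, x ^ (q^2 + q + 1) = (x ^ q) ^ q * x ^ q * x := by
    intro x
    rw [hqsplit, pow_add, pow_add, pow_one, pow_mul]
  have h1mt : (1 - t) ^ q = 1 - t ^ q := by
    rw [hsub, one_pow]
  have h1mt2 : ((1 - t) ^ q) ^ q = 1 - (t ^ q) ^ q := by
    rw [h1mt, hsub, one_pow]
  have huq : (-(2*b) * t) ^ q = -(2*b) * t ^ q := by rw [mul_pow, hwq]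
  have huq2 : ((-(2*b) * t) ^ q) ^ q = -(2*b) * (t ^ q) ^ q := by rw [huq, mul_pow, hwq]
  have hu1 : (-(2*b) * t) ^ (q^2 + q + 1) = 1 := by
    rw [hormula, huq2, huq]
    have hr : (-(2*b) * (t ^ q) ^ q) * (-(2*b) * t ^ q) * (-(2*b) * t)
        = (-(2*b))^3 * (t * t ^ q * (t ^ q) ^ q) := by ring
    rw [hr, hw3, hN']
    norm_num
  have hvq : (-(2*b) * (1 - t)) ^ q = -(2*b) * (1 - t ^ q) := by rw [mul_pow, hwq, h1mt]
  have hvq2 : ((-(2*b) * (1 - t)) ^ q) ^ q = -(2*b) * (1 - (t ^ q) ^ q) := by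
    rw [hvq, mul_pow, hwq, hsub, one_pow]
  have hv1 : (-(2*b) * (1 - t)) ^ (q^2 + q + 1) = 1 := by
    rw [hormula, hvq2, hvq]
    have hr : (-(2*b) * (1 - (t ^ q) ^ q)) * (-(2*b) * (1 - t ^ q)) * (-(2*b) * (1 - t))
        = (-(2*b))^3 * ((1 - t) * (1 - t ^ q) * (1 - (t ^ q) ^ q)) := by ring
    rw [hr, hw3, hM']
    norm_num
  obtain ⟨C, hC0, hCu⟩ := exists_pow_root (by omega) hE _ hu1
  obtain ⟨z, hz0, hzv⟩ := exists_pow_root (by omega) hE _ hv1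
  -- final contradiction
  intro H
  have hbij := H C hC0
  have hCq : C ^ (q^2) = (-(2*b) * t) * C := by
    rw [← hCu, ← pow_succ]
    congr 1
    have : 1 ≤ q ^ 2 := Nat.one_le_pow _ _ (by omega)
    omega
  have hzq : z ^ (q^2) = (-(2*b) * (1 - t)) * z := by
    rw [← hzv, ← pow_succ]
    congr 1
    have : 1 ≤ q ^ 2 := Nat.one_le_pow _ _ (by omega)
    omega
  have heq : (fun x : E =>
        (x + C) * ((x + C) ^ (q ^ 2) + algebraMap F E B * (x + C))
          - x * (x ^ (q ^ 2) + algebraMap F E B * x)) z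
      = (fun x : E =>
        (x + C) * ((x + C) ^ (q ^ 2) + algebraMap F E B * (x + C))
          - x * (x ^ (q ^ 2) + algebraMap F E B * x)) 0 := by
    simp only [zero_add, zero_mul, sub_zero, ← hb_def]
    rw [hadd2]
    linear_combination z * hCq + C * hzq
  exact hz0 (hbij.injective heq)
end
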